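/- Let p be a prime, n < p − 1 a natural number, and let (A,+,∘) be an F_p-brace of cardinality p^n. Let a ∈ A, a ≠ 0, with a^{∘p} = 0 (a has order p in (A,∘)). Then the set {b ∈ A : a * b = 0} has at least p^{n/p} elements. -/

import Mathlib

/-- A left brace: an abelian group `(A,+)` together with a group operation `circ`
(whose identity is `0`) satisfying `a ∘ (b + c) + a = a ∘ b + a ∘ c`. -/
structure LeftBrace (A : Type*) [AddCommGroup A] where
  circ : A → A → A
  inv : A → A
  circ_assoc : ∀ a b c, circ (circ a b) c = circ a (circ b c)
  circ_zero : ∀ a, circ a 0 = a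
  zero_circ : ∀ a, circ 0 a = a
  inv_circ : ∀ a, circ (inv a) a = 0
  compat : ∀ a b c, circ a (b + c) + a = circ a b + circ a c

namespace LeftBrace

variable {A : Type*} [AddCommGroup A]

/-- The star operation `a * b = a ∘ b - a - b`. -/
def star (B : LeftBrace A) (a b : A) : A := B.circ a b - a - b

/-- `circPow B a n` is the product `a ∘ a ∘ ⋯ ∘ a` of `n` copies of `a`. -/
def circPow (B : LeftBrace A) (a : A) : ℕ → A
  | 0 => 0
  | n + 1 => B.circ a (B.circPow a n)

end LeftBrace

private lemma aux_card_comp {A : Type*} [AddCommGroup A] [Fintype A] (T S : A →+ A) :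
    Nat.card {x : A // S (T x) = 0} ≤
      Nat.card {x : A // T x = 0} * Nat.card {y : A // S y = 0} := by
  classical
  rw [Nat.card_eq_fintype_card, Nat.card_eq_fintype_card, Nat.card_eq_fintype_card,
    Fintype.card_subtype, Fintype.card_subtype, Fintype.card_subtype]
  apply Finset.card_le_mul_card_image_of_maps_to (f := fun x => T x)
    (t := Finset.univ.filter fun y => S y = 0)
  · intro x hx
    simp only [Finset.mem_filter, Finset.mem_univ, true_and] at hx ⊢
    exact hx
  · intro b _
    by_cases hne :
        (((Finset.univ.filter fun x => S (T x) = 0)).filter fun x => T x = b).Nonempty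
    · obtain ⟨x0, hx0⟩ := hne
      have hx0' : T x0 = b := (Finset.mem_filter.mp hx0).2
      apply Finset.card_le_card_of_injOn (fun x => x - x0)
      · intro x hx
        simp only [Finset.mem_coe, Finset.mem_filter, Finset.mem_univ, true_and] at hx ⊢
        rw [map_sub, hx.2, hx0', sub_self]
      · intro x _ y _ hxy
        exact sub_left_injective hxy
    · rw [Finset.not_nonempty_iff_eq_empty.mp hne]
      simp

/-- Let p be prime, n < p - 1, and A an F_p-brace of cardinality p^n (its additive
group is elementary abelian).  If a ≠ 0 has order p in (A, ∘), then the set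
{b | a * b = 0} has at least p^{n/p} elements. -/
theorem stmt15 {A : Type*} [AddCommGroup A] [Fintype A] (B : LeftBrace A) (p n : ℕ)
    (hp : p.Prime) (hn : n < p - 1) (hcard : Fintype.card A = p ^ n)
    (helem : ∀ a : A, p • a = 0)
    (a : A) (ha : a ≠ 0) (hap : B.circPow a p = 0) :
    (p : ℝ) ^ ((n : ℝ) / p) ≤ Nat.card {b : A // B.star a b = 0} := by
  classical
  haveI : Fact p.Prime := ⟨hp⟩
  -- the lambda map as an additive endomorphism
  have hadd : ∀ x u v : A, B.circ x (u + v) = B.circ x u + B.circ x v - x := by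
    intro x u v
    rw [eq_sub_iff_add_eq]
    exact B.compat x u v
  set f : AddMonoid.End A := AddMonoidHom.mk' (fun b => B.circ a b - a) (by
    intro u v
    show B.circ a (u + v) - a = (B.circ a u - a) + (B.circ a v - a)
    rw [hadd]
    abel) with hf
  have hfapp : ∀ b, f b = B.circ a b - a := fun _ => rfl
  -- iterates of f
  have hiter : ∀ (k : ℕ) (b : A), (f ^ k) b = B.circ (B.circPow a k) b - B.circPow a k := by
    intro k
    induction k with
    | zero => intro b; simp [LeftBrace.circPow, B.zero_circ]
    | succ k ih =>
      intro b
      have h1 : (f ^ (k + 1)) b = f ((f ^ k) b) := by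
        rw [pow_succ']; rfl
      rw [h1, ih, hfapp]
      set c := B.circPow a k with hc
      have h2 : B.circ a (B.circ c b - c + c) = B.circ a (B.circ c b - c) + B.circ a c - a :=
        hadd a _ c
      rw [sub_add_cancel] at h2
      have h3 : B.circ a (B.circ c b - c) = B.circ a (B.circ c b) - B.circ a c + a := by
        rw [h2]
        abel
      rw [h3]
      show B.circ a (B.circ c b) - B.circ a c + a - a
        = B.circ (B.circPow a (k + 1)) b - B.circPow a (k + 1)
      have : B.circPow a (k + 1) = B.circ a c := rfl
      rw [this, ← B.circ_assoc]
      abel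
  have hfp : f ^ p = 1 := by
    refine AddMonoidHom.ext fun b => ?_
    have := hiter p b
    rw [hap, B.zero_circ] at this
    rw [sub_zero] at this; exact this
  -- characteristic p of the endomorphism ring
  have horda : addOrderOf a = p := addOrderOf_eq_prime (helem a) ha
  haveI : CharP (AddMonoid.End A) p := by
    constructor
    intro q
    constructor
    · intro h
      have hq : (q : AddMonoid.End A) a = 0 := by rw [h]; rfl
      rw [AddMonoid.End.natCast_apply] at hq
      rw [← horda]
      exact addOrderOf_dvd_of_nsmul_eq_zero hq
    · rintro ⟨k, rfl⟩
      refine AddMonoidHom.ext fun x => ?_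
      show ((p * k : ℕ) : AddMonoid.End A) x = (0 : A)
      rw [AddMonoid.End.natCast_apply, mul_nsmul, helem]
      · simp
  -- the star map T = f - 1 is nilpotent of index ≤ p
  set T : AddMonoid.End A := f - 1 with hT
  have hTapp : ∀ b, T b = B.star a b := by
    intro b
    show f b - b = B.star a b
    rw [hfapp]
    show B.circ a b - a - b = B.circ a b - a - b
    rfl
  have hTp : T ^ p = 0 := by
    rw [hT, sub_pow_char_of_commute p (Commute.one_right f), hfp, one_pow, sub_self]
  -- counting kernels of powers
  set m : ℕ := Nat.card {b : A // B.star a b = 0} with hm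
  have hmT : m = Nat.card {b : A // T b = 0} := by
    apply Nat.card_congr
    exact Equiv.subtypeEquivRight (fun b => by rw [hTapp])
  have hchain : ∀ k : ℕ, Nat.card {x : A // (T ^ k) x = 0} ≤ m ^ k := by
    intro k
    induction k with
    | zero =>
      have : Nat.card {x : A // (T ^ 0) x = 0} = Nat.card {x : A // x = 0} := by
        apply Nat.card_congr
        exact Equiv.subtypeEquivRight (fun b => by rw [pow_zero]; rfl)
      rw [this]
      simp
    | succ k ih =>
      have hstep : Nat.card {x : A // (T ^ (k + 1)) x = 0}
          ≤ Nat.card {x : A // T x = 0} * Nat.card {y : A // (T ^ k) y = 0} := by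
        have := aux_card_comp (A := A) (T : A →+ A) ((T ^ k : AddMonoid.End A) : A →+ A)
        refine le_trans (le_of_eq ?_) this
        apply Nat.card_congr
        refine Equiv.subtypeEquivRight (fun b => ?_)
        have : (T ^ (k + 1)) b = (T ^ k) (T b) := by
          rw [pow_succ]; rfl
        rw [this]
        exact Iff.rfl
      calc Nat.card {x : A // (T ^ (k + 1)) x = 0}
          ≤ Nat.card {x : A // T x = 0} * Nat.card {y : A // (T ^ k) y = 0} := hstep
        _ ≤ m * m ^ k := by
            apply Nat.mul_le_mul
            · rw [hmT]
            · exact ih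
        _ = m ^ (k + 1) := by ring
  have hall : Nat.card {x : A // (T ^ p) x = 0} = p ^ n := by
    rw [hTp]
    have : Nat.card {x : A // (0 : AddMonoid.End A) x = 0} = Nat.card A := by
      apply Nat.card_congr
      refine Equiv.subtypeUnivEquiv (fun b => rfl)
    rw [this, Nat.card_eq_fintype_card, hcard]
  have hkey : p ^ n ≤ m ^ p := by
    rw [← hall]; exact hchain p
  -- pass to the reals
  have hp0 : (0 : ℝ) < p := by exact_mod_cast hp.pos
  have hm0 : (0 : ℝ) ≤ (m : ℝ) := by positivity
  have hkeyR : ((p : ℝ) ^ (n : ℕ)) ≤ ((m : ℝ) ^ (p : ℕ)) := by exact_mod_cast hkey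
  have hpne : (p : ℝ) ≠ 0 := ne_of_gt hp0
  have e1 : (p : ℝ) ^ ((n : ℝ) / p) = ((p : ℝ) ^ (n : ℕ)) ^ ((1 : ℝ) / p) := by
    rw [← Real.rpow_natCast (p : ℝ) n, ← Real.rpow_mul (le_of_lt hp0)]
    congr 1
    field_simp
  have e2 : ((m : ℝ) ^ (p : ℕ)) ^ ((1 : ℝ) / p) = (m : ℝ) := by
    rw [← Real.rpow_natCast (m : ℝ) p, ← Real.rpow_mul hm0]
    rw [mul_one_div, div_self hpne, Real.rpow_one]
  rw [e1, ← e2]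
  apply Real.rpow_le_rpow (by positivity) hkeyR (by positivity)
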